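/- If f is a holomorphic function on a connected open subset U of ℂ with f' nowhere vanishing on U, and the Schwarzian derivative S(f) vanishes identically on U, then f agrees on U with a Möbius transformation, i.e. there exist a,b,c,d ∈ ℂ with ad - bc ≠ 0 such that f(z) = (az+b)/(cz+d) for all z in U. -/

import Mathlib

open Filter Topology


/-- The Schwarzian derivative `S(f) = f'''/f' - (3/2)(f''/f')²`. -/
noncomputable def schwarzian (f : ℂ → ℂ) (z : ℂ) : ℂ :=
  iteratedDeriv 3 f z / deriv f z - (3 / 2) * (iteratedDeriv 2 f z / deriv f z) ^ 2


/-- A function analytic on an open preconnected set with vanishing derivative is constant. -/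
lemma const_of_deriv_zero {U : Set ℂ} (hU : IsOpen U) (hUc : IsPreconnected U)
    {h : ℂ → ℂ} (hh : AnalyticOnNhd ℂ h U) (hd : ∀ z ∈ U, deriv h z = 0)
    {z₀ : ℂ} (hz₀ : z₀ ∈ U) : ∀ z ∈ U, h z = h z₀ := by
  have key : Set.EqOn h (fun _ => h z₀) U := by
    apply hh.eqOn_of_preconnected_of_eventuallyEq (analyticOnNhd_const) hUc hz₀
    obtain ⟨r, hr, hball⟩ := Metric.isOpen_iff.1 hU z₀ hz₀
    have hconst : ∀ z ∈ Metric.ball z₀ r, h z = h z₀ := by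
      intro z hz
      apply (convex_ball z₀ r).is_const_of_fderivWithin_eq_zero
        (hh.differentiableOn.mono hball) ?_ hz (Metric.mem_ball_self hr)
      intro x hx
      rw [fderivWithin_of_isOpen Metric.isOpen_ball hx]
      have hdz : HasDerivAt h (0 : ℂ) x := by
        have := (hh x (hball hx)).differentiableAt.hasDerivAt
        rwa [hd x (hball hx)] at this
      have := hdz.hasFDerivAt.fderiv
      rw [this]; ext; simp
    filter_upwards [Metric.ball_mem_nhds z₀ hr] with z hz using hconst z hz
  intro z hz; exact key hz

/-- A solution of `p' = p²/2` on a connected open set vanishing at a point vanishes identically. -/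
lemma ode_zero_prop {U : Set ℂ} (hU : IsOpen U) (hUc : IsPreconnected U) {p : ℂ → ℂ}
    (hp : AnalyticOnNhd ℂ p U) (hd : ∀ z ∈ U, HasDerivAt p ((p z)^2/2) z)
    {z₀ : ℂ} (hz₀ : z₀ ∈ U) (h0 : p z₀ = 0) : ∀ z ∈ U, p z = 0 := by
  suffices hev : ∀ᶠ z in 𝓝 z₀, p z = 0 by
    intro z hz
    exact hp.eqOn_zero_of_preconnected_of_eventuallyEq_zero hUc hz₀ hev hz
  by_contra hne
  obtain ⟨n, g, hg, hg0, heq⟩ := ((hp z₀ hz₀).exists_eventuallyEq_pow_smul_nonzero_iff).2 hne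
  -- n ≥ 1
  have hn0 : n ≠ 0 := by
    rintro rfl
    have h5 := heq.self_of_nhds
    simp only [sub_self, pow_zero, one_smul, h0] at h5
    exact hg0 h5.symm
  obtain ⟨m, rfl⟩ := Nat.exists_eq_succ_of_ne_zero hn0
  -- deriv g analytic at z₀
  obtain ⟨s, hs_mem, hsana⟩ := hg.exists_mem_nhds_analyticOnNhd
  have hg' : AnalyticAt ℂ (deriv g) z₀ := by
    obtain ⟨t, hto, htz, hts⟩ := mem_nhds_iff.mp hs_mem
    exact ((hsana.mono hto).deriv) z₀ hts
  have heq' : p =ᶠ[𝓝 z₀] fun z => (z - z₀) ^ (m + 1) • g z := heq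
  -- the key eventual identity
  have hkey : ∀ᶠ z in 𝓝 z₀, (m + 1 : ℂ) * (z - z₀) ^ m * g z + (z - z₀) ^ (m + 1) * deriv g z
      = ((z - z₀) ^ (m + 1) * g z) ^ 2 / 2 := by
    filter_upwards [heq, heq'.deriv, hU.mem_nhds hz₀, hg.eventually_analyticAt]
      with z hz hdz hzU hgz
    have h1 : HasDerivAt (fun w => (w - z₀) ^ (m + 1) • g w)
        (((m + 1 : ℕ) : ℂ) * (z - z₀) ^ m * 1 * g z + (z - z₀) ^ (m + 1) * deriv g z) z := by
      have hbase : HasDerivAt (fun w : ℂ => w - z₀) 1 z := (hasDerivAt_id z).sub_const z₀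
      have hpow := hbase.fun_pow (m + 1)
      have := hpow.fun_mul hgz.differentiableAt.hasDerivAt
      simpa [smul_eq_mul] using this
    have h2 : deriv p z = (p z) ^ 2 / 2 := (hd z hzU).deriv
    have h4 : p z = (z - z₀) ^ (m + 1) * g z := by simpa [smul_eq_mul] using hz
    rw [hdz, h1.deriv, h4] at h2
    push_cast at h2 ⊢
    linear_combination h2
  -- divide by (z - z₀)^m and take the limit z → z₀ along punctured neighborhoods
  have hpunct : (fun z => (m + 1 : ℂ) * g z + (z - z₀) * deriv g z)
      =ᶠ[𝓝[≠] z₀] (fun z => (z - z₀) ^ (m + 2) * (g z) ^ 2 / 2) := by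
    filter_upwards [eventually_nhdsWithin_of_eventually_nhds hkey, self_mem_nhdsWithin]
      with z hz hz'
    have hzz : (z - z₀) ≠ 0 := sub_ne_zero.2 hz'
    have hpm : ((z - z₀) ^ m) ≠ 0 := pow_ne_zero _ hzz
    apply mul_left_cancel₀ hpm
    linear_combination hz
  have hcont1 : Filter.Tendsto (fun z => (m + 1 : ℂ) * g z + (z - z₀) * deriv g z)
      (𝓝[≠] z₀) (𝓝 ((m + 1 : ℂ) * g z₀)) := by
    have hc : ContinuousAt (fun z => (m + 1 : ℂ) * g z + (z - z₀) * deriv g z) z₀ :=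
      (continuousAt_const.mul hg.continuousAt).add
        ((continuousAt_id.sub continuousAt_const).mul hg'.continuousAt)
    have := hc.tendsto.mono_left (nhdsWithin_le_nhds (s := {z₀}ᶜ))
    simpa using this
  have hcont2 : Filter.Tendsto (fun z => (z - z₀) ^ (m + 2) * (g z) ^ 2 / 2)
      (𝓝[≠] z₀) (𝓝 0) := by
    have hc : ContinuousAt (fun z => (z - z₀) ^ (m + 2) * (g z) ^ 2 / 2) z₀ :=
      (((continuousAt_id.sub continuousAt_const).pow _).mul (hg.continuousAt.pow _)).div_const _
    have := hc.tendsto.mono_left (nhdsWithin_le_nhds (s := {z₀}ᶜ))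
    simpa using this
  have hlim : (m + 1 : ℂ) * g z₀ = 0 :=
    tendsto_nhds_unique (hcont1.congr' hpunct) hcont2
  have : g z₀ = 0 := by
    have hm1 : (m + 1 : ℂ) ≠ 0 := by exact_mod_cast Nat.succ_ne_zero m
    exact (mul_eq_zero.1 hlim).resolve_left hm1
  exact hg0 this

/-- A holomorphic function with nonvanishing derivative and vanishing Schwarzian on a
connected open set agrees with a Möbius transformation there. -/
theorem eq_moebius_of_schwarzian_eq_zero (U : Set ℂ) (f : ℂ → ℂ)
    (hU : IsOpen U) (hUc : IsConnected U)
    (hf : DifferentiableOn ℂ f U)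
    (hf' : ∀ z ∈ U, deriv f z ≠ 0)
    (hS : ∀ z ∈ U, schwarzian f z = 0) :
    ∃ a b c d : ℂ, a * d - b * c ≠ 0 ∧ ∀ z ∈ U, f z = (a * z + b) / (c * z + d) := by
  obtain ⟨z₀, hz₀⟩ := hUc.nonempty
  have hUp : IsPreconnected U := hUc.isPreconnected
  have hA : AnalyticOnNhd ℂ f U := hf.analyticOnNhd hU
  have hA1 : AnalyticOnNhd ℂ (deriv f) U := hA.deriv
  have hA2 : AnalyticOnNhd ℂ (deriv (deriv f)) U := hA1.deriv
  have hA3 : AnalyticOnNhd ℂ (deriv (deriv (deriv f))) U := hA2.deriv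
  set F1 := deriv f with hF1
  set F2 := deriv (deriv f) with hF2
  set F3 := deriv (deriv (deriv f)) with hF3
  have hODE : ∀ z ∈ U, 2 * F3 z * F1 z = 3 * (F2 z) ^ 2 := by
    intro z hz
    have h := hS z hz
    rw [schwarzian] at h
    have h2 : iteratedDeriv 2 f = F2 := by
      rw [iteratedDeriv_succ, iteratedDeriv_one]
    have h3 : iteratedDeriv 3 f = F3 := by
      rw [iteratedDeriv_succ, iteratedDeriv_succ, iteratedDeriv_one]
    rw [h2, h3] at h
    have h1 := hf' z hz
    have h4 : F3 z / F1 z = 3 / 2 * (F2 z / F1 z) ^ 2 := by linear_combination h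
    have e1 : F3 z = F3 z / F1 z * F1 z := (div_mul_cancel₀ _ h1).symm
    have e2 : F2 z = F2 z / F1 z * F1 z := (div_mul_cancel₀ _ h1).symm
    rw [e1, e2, h4]
    ring
  set p : ℂ → ℂ := fun z => F2 z / F1 z with hp
  have hpA : AnalyticOnNhd ℂ p U := fun z hz => (hA2 z hz).div (hA1 z hz) (hf' z hz)
  have hpd : ∀ z ∈ U, HasDerivAt p ((p z) ^ 2 / 2) z := by
    intro z hz
    have hd2 : HasDerivAt F2 (F3 z) z := (hA2 z hz).differentiableAt.hasDerivAt
    have hd1 : HasDerivAt F1 (F2 z) z := (hA1 z hz).differentiableAt.hasDerivAt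
    have hval : (F3 z * F1 z - F2 z * F2 z) / (F1 z) ^ 2 = (p z) ^ 2 / 2 := by
      have h1 := hf' z hz
      rw [hp]
      field_simp
      linear_combination hODE z hz
    have := hd2.div hd1 (hf' z hz)
    rw [hval] at this
    exact this
  by_cases hcase : ∃ w ∈ U, F2 w = 0
  · -- f is affine
    obtain ⟨w, hw, hw0⟩ := hcase
    have hp0 : p w = 0 := by rw [hp]; simp [hw0]
    have hF20 : ∀ z ∈ U, F2 z = 0 := by
      intro z hz
      have h5 := ode_zero_prop hU hUp hpA hpd hw hp0 z hz
      rw [hp] at h5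
      exact (div_eq_zero_iff.1 h5).resolve_right (hf' z hz)
    have hF1c : ∀ z ∈ U, F1 z = F1 z₀ := const_of_deriv_zero hU hUp hA1 hF20 hz₀
    set c := F1 z₀ with hc0
    have hc : c ≠ 0 := hf' z₀ hz₀
    set L : ℂ → ℂ := fun z => f z - c * z with hL
    have hLA : AnalyticOnNhd ℂ L U := fun z hz =>
      (hA z hz).sub (analyticAt_const.mul analyticAt_id)
    have hLd : ∀ z ∈ U, deriv L z = 0 := by
      intro z hz
      have h1 : HasDerivAt L (F1 z - c * 1) z :=
        ((hA z hz).differentiableAt.hasDerivAt).sub ((hasDerivAt_id z).const_mul c)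
      rw [h1.deriv, hF1c z hz]
      ring
    have hLc := const_of_deriv_zero hU hUp hLA hLd hz₀
    refine ⟨c, L z₀, 0, 1, by simpa using hc, ?_⟩
    intro z hz
    have h5 : f z - c * z = f z₀ - c * z₀ := hLc z hz
    have hden : (0 : ℂ) * z + 1 = 1 := by ring
    rw [hden, div_one]
    linear_combination h5
  · -- f is a genuine Möbius map
    push_neg at hcase
    have hF2ne : ∀ z ∈ U, F2 z ≠ 0 := hcase
    set φ : ℂ → ℂ := fun z => -2 * F1 z / F2 z with hφ
    have hφA : AnalyticOnNhd ℂ (fun z => φ z - z) U := fun z hz =>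
      (((analyticAt_const.mul (hA1 z hz)).div (hA2 z hz) (hF2ne z hz))).sub analyticAt_id
    have hφd : ∀ z ∈ U, deriv (fun z => φ z - z) z = 0 := by
      intro z hz
      have hd1 : HasDerivAt (fun w => -2 * F1 w) (-2 * F2 z) z :=
        ((hA1 z hz).differentiableAt.hasDerivAt).const_mul (-2)
      have hd2 : HasDerivAt F2 (F3 z) z := (hA2 z hz).differentiableAt.hasDerivAt
      have h := hd1.div hd2 (hF2ne z hz)
      have hval : (-2 * F2 z * F2 z - -2 * F1 z * F3 z) / (F2 z) ^ 2 = 1 := by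
        have h2 := hF2ne z hz
        field_simp
        linear_combination hODE z hz
      rw [hval] at h
      have h6 : HasDerivAt (fun z => φ z - z) (1 - 1) z := h.sub (hasDerivAt_id z)
      rw [h6.deriv]
      ring
    have hφc := const_of_deriv_zero hU hUp hφA hφd hz₀
    obtain ⟨z₁, hφeq⟩ : ∃ z₁ : ℂ, ∀ z ∈ U, φ z = z - z₁ := by
      refine ⟨z₀ - φ z₀, fun z hz => ?_⟩
      have := hφc z hz
      linear_combination this
    have hzne : ∀ z ∈ U, z - z₁ ≠ 0 := by
      intro z hz
      rw [← hφeq z hz, hφ]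
      exact div_ne_zero (mul_ne_zero (by norm_num) (hf' z hz)) (hF2ne z hz)
    have hrel : ∀ z ∈ U, F2 z * (z - z₁) = -2 * F1 z := by
      intro z hz
      have h5 := hφeq z hz
      rw [hφ] at h5
      field_simp [hF2ne z hz] at h5
      linear_combination -h5
    set g : ℂ → ℂ := fun z => F1 z * (z - z₁) ^ 2 with hg
    have hgA : AnalyticOnNhd ℂ g U := fun z hz =>
      (hA1 z hz).mul ((analyticAt_id.sub analyticAt_const).pow 2)
    have hgd : ∀ z ∈ U, deriv g z = 0 := by
      intro z hz
      have hd1 : HasDerivAt F1 (F2 z) z := (hA1 z hz).differentiableAt.hasDerivAt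
      have hd2 : HasDerivAt (fun w : ℂ => (w - z₁) ^ 2) (((2 : ℕ) : ℂ) * (z - z₁) ^ 1 * 1) z :=
        ((hasDerivAt_id z).sub_const z₁).pow 2
      have h6 := hd1.fun_mul hd2
      rw [h6.deriv]
      push_cast
      linear_combination (z - z₁) * hrel z hz
    have hgc := const_of_deriv_zero hU hUp hgA hgd hz₀
    obtain ⟨k, hk0, hk⟩ : ∃ k : ℂ, (∀ z ∈ U, g z = k) ∧ k ≠ 0 := by
      refine ⟨g z₀, hgc, mul_ne_zero (hf' z₀ hz₀) (pow_ne_zero 2 (hzne z₀ hz₀))⟩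
    set h : ℂ → ℂ := fun z => f z + k / (z - z₁) with hh
    have hhA : AnalyticOnNhd ℂ h U := fun z hz =>
      (hA z hz).add (analyticAt_const.div (analyticAt_id.sub analyticAt_const) (hzne z hz))
    have hhd : ∀ z ∈ U, deriv h z = 0 := by
      intro z hz
      have hd1 : HasDerivAt f (F1 z) z := (hA z hz).differentiableAt.hasDerivAt
      have hd2 : HasDerivAt (fun w : ℂ => k / (w - z₁))
          ((0 * (z - z₁) - k * 1) / (z - z₁) ^ 2) z :=
        (hasDerivAt_const z k).div ((hasDerivAt_id z).sub_const z₁) (hzne z hz)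
      have h6 := hd1.fun_add hd2
      rw [h6.deriv]
      have h7 : F1 z * (z - z₁) ^ 2 = k := hk0 z hz
      have h8 := hzne z hz
      field_simp
      linear_combination h7
    obtain ⟨m, hhc⟩ : ∃ m : ℂ, ∀ z ∈ U, f z + k / (z - z₁) = m :=
      ⟨h z₀, const_of_deriv_zero hU hUp hhA hhd hz₀⟩
    refine ⟨m, -m * z₁ - k, 1, -z₁, ?_, ?_⟩
    · have : m * -z₁ - (-m * z₁ - k) * 1 = k := by ring
      rw [this]
      exact hk
    · intro z hz
      have h9 := hhc z hz
      have h6 := hzne z hz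
      have hden : (1 : ℂ) * z + -z₁ = z - z₁ := by ring
      rw [hden, eq_div_iff h6]
      field_simp at h9
      linear_combination h9
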